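/- Let (X,d) be a metric space, {x_n}_{n≥0} a sequence in X with d(x_n, x_{n+1}) → 0, and m : X × X → [0,∞) a function such that for any two subsequences {x_{p_n}} and {x_{q_n}}, limsup_{n→∞} m(x_{p_n}, x_{q_n}) ≤ limsup_{n→∞} d(x_{p_n}, x_{q_n}). Suppose that for every ε > 0 there exists a positive integer ν such that for any two subsequences {x_{p_n}} and {x_{q_n}} with limsup_{n→∞} m(x_{p_n}, x_{q_n}) ≤ ε there exists N with d(x_{p_n+ν}, x_{q_n+ν}) ≤ ε for all n ≥ N. Then {x_n} is a Cauchy sequence. -/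

import Mathlib

open Filter

/-- Corollary 2.4 (iii). -/
theorem stmt4 {X : Type*} [MetricSpace X] (x : ℕ → X) (m : X → X → ℝ)
    (hm0 : ∀ a b : X, 0 ≤ m a b)
    (hm : ∀ p q : ℕ → ℕ, StrictMono p → StrictMono q →
      limsup (fun n => m (x (p n)) (x (q n))) atTop ≤
      limsup (fun n => dist (x (p n)) (x (q n))) atTop)
    (hd : Tendsto (fun n => dist (x n) (x (n + 1))) atTop (nhds 0))
    (h : ∀ ε : ℝ, 0 < ε → ∃ ν : ℕ, 0 < ν ∧
      ∀ p q : ℕ → ℕ, StrictMono p → StrictMono q →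
        limsup (fun n => m (x (p n)) (x (q n))) atTop ≤ ε →
        ∃ N : ℕ, ∀ n ≥ N, dist (x (p n + ν)) (x (q n + ν)) ≤ ε) :
    CauchySeq x := by
  by_contra hC
  rw [Metric.cauchySeq_iff] at hC
  push_neg at hC
  obtain ⟨ε0, hε0, hnc⟩ := hC
  set ε : ℝ := ε0 / 2 with hεdef
  have hε : 0 < ε := by positivity
  obtain ⟨ν, hν, hkey⟩ := h ε hε
  -- From non-Cauchyness, for any N there are N ≤ i < j with ε < dist (x i) (x j)
  have H : ∀ N : ℕ, ∃ i, N ≤ i ∧ ∃ j, i < j ∧ ε < dist (x i) (x j) := by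
    intro N
    obtain ⟨i, hi, j, hj, hij⟩ := hnc N
    have hij' : ε < dist (x i) (x j) := by
      have : ε0 ≤ dist (x i) (x j) := hij
      linarith
    rcases lt_trichotomy i j with hlt | heq | hgt
    · exact ⟨i, hi, j, hlt, hij'⟩
    · exfalso; rw [heq, dist_self] at hij'; linarith
    · exact ⟨j, hj, i, hgt, by rwa [dist_comm]⟩
  choose f hfge hfex using H
  set g : ℕ → ℕ := fun N => Nat.find (hfex N) with hgdef
  have hgspec : ∀ N, f N < g N ∧ ε < dist (x (f N)) (x (g N)) := fun N =>
    Nat.find_spec (hfex N)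
  have hgmin : ∀ N k, f N < k → k < g N → dist (x (f N)) (x k) ≤ ε := by
    intro N k hk1 hk2
    have := Nat.find_min (hfex N) hk2
    push_neg at this
    exact this hk1
  -- the recursive sequence of base indices
  set a : ℕ → ℕ := fun n => Nat.rec ν (fun _ an => g an + 1) n with hadef
  have ha0 : a 0 = ν := rfl
  have hastep : ∀ n, a (n + 1) = g (a n) + 1 := fun n => rfl
  set p : ℕ → ℕ := fun n => f (a n) with hpdef
  set q : ℕ → ℕ := fun n => g (a n) with hqdef
  have hap : ∀ n, a n ≤ p n := fun n => hfge (a n)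
  have hpq : ∀ n, p n < q n := fun n => (hgspec (a n)).1
  have hdist : ∀ n, ε < dist (x (p n)) (x (q n)) := fun n => (hgspec (a n)).2
  have haq : ∀ n, a (n + 1) = q n + 1 := fun n => rfl
  have haν : ∀ n, ν ≤ a n := by
    intro n
    induction n with
    | zero => simp [ha0]
    | succ k ih =>
      have h1 : a k ≤ p k := hap k
      have h2 : p k < q k := hpq k
      have h3 := haq k
      omega
  have han : ∀ n, n ≤ a n := by
    intro n
    induction n with
    | zero => omega
    | succ k ih =>
      have h1 : a k ≤ p k := hap k
      have h2 : p k < q k := hpq k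
      have := haq k
      omega
  have hνp : ∀ n, ν ≤ p n := fun n => le_trans (haν n) (hap n)
  have hνq : ∀ n, ν + 1 ≤ q n := fun n => by have := hνp n; have := hpq n; omega
  have hpmono : StrictMono p := by
    apply strictMono_nat_of_lt_succ
    intro n
    have h1 : a (n + 1) ≤ p (n + 1) := hap (n + 1)
    have h2 := haq n
    have h3 := hpq n
    omega
  have hqmono : StrictMono q := by
    apply strictMono_nat_of_lt_succ
    intro n
    have h1 : a (n + 1) ≤ p (n + 1) := hap (n + 1)
    have h2 := haq n
    have h3 := hpq (n + 1)
    omega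
  -- middle bound
  have hmid : ∀ n, dist (x (p n)) (x (q n - 1)) ≤ ε := by
    intro n
    rcases eq_or_lt_of_le (Nat.succ_le_of_lt (hpq n)) with heq | hlt
    · have : q n - 1 = p n := by omega
      rw [this, dist_self]; exact le_of_lt hε
    · have e1 : f (a n) = p n := rfl
      have e2 : g (a n) = q n := rfl
      have := hgmin (a n) (q n - 1) (by rw [e1]; omega) (by rw [e2]; omega)
      rwa [e1] at this
  -- chain bound
  have chain : ∀ (b k : ℕ), dist (x b) (x (b + k)) ≤
      ∑ i ∈ Finset.range k, dist (x (b + i)) (x (b + i + 1)) := by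
    intro b k
    have := dist_le_range_sum_dist (fun i => x (b + i)) k
    simpa [add_assoc] using this
  -- eventual bound on shifted distances
  have hev : ∀ δ : ℝ, 0 < δ → ∀ᶠ n in atTop,
      dist (x (p n - ν)) (x (q n - ν)) ≤ ε + δ := by
    intro δ hδ
    have hδ' : 0 < δ / (2 * ν) := by positivity
    have := (hd.eventually_lt_const hδ')
    rw [eventually_atTop] at this
    obtain ⟨M, hM⟩ := this
    rw [eventually_atTop]
    refine ⟨M + ν, fun n hn => ?_⟩
    have hpn : M + ν ≤ p n := le_trans hn (le_trans (han n) (hap n))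
    have hqn : M + ν ≤ q n := le_trans hpn (le_of_lt (hpq n))
    -- first chain: from p n - ν to p n
    have hc1 : dist (x (p n - ν)) (x (p n)) ≤ ν * (δ / (2 * ν)) := by
      have h1 : p n - ν + ν = p n := by omega
      calc dist (x (p n - ν)) (x (p n)) = dist (x (p n - ν)) (x (p n - ν + ν)) := by
            rw [h1]
        _ ≤ ∑ i ∈ Finset.range ν, dist (x (p n - ν + i)) (x (p n - ν + i + 1)) :=
            chain _ _
        _ ≤ ∑ _i ∈ Finset.range ν, (δ / (2 * ν)) := by
            apply Finset.sum_le_sum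
            intro i _
            exact le_of_lt (hM (p n - ν + i) (by omega))
        _ = ν * (δ / (2 * ν)) := by
            rw [Finset.sum_const, Finset.card_range, nsmul_eq_mul]
    -- second chain: from q n - ν to q n - 1
    have hc2 : dist (x (q n - ν)) (x (q n - 1)) ≤ ν * (δ / (2 * ν)) := by
      have h1 : q n - ν + (ν - 1) = q n - 1 := by have := hνq n; omega
      calc dist (x (q n - ν)) (x (q n - 1))
            = dist (x (q n - ν)) (x (q n - ν + (ν - 1))) := by rw [h1]
        _ ≤ ∑ i ∈ Finset.range (ν - 1), dist (x (q n - ν + i)) (x (q n - ν + i + 1)) :=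
            chain _ _
        _ ≤ ∑ _i ∈ Finset.range (ν - 1), (δ / (2 * ν)) := by
            apply Finset.sum_le_sum
            intro i _
            exact le_of_lt (hM (q n - ν + i) (by omega))
        _ = (ν - 1 : ℕ) * (δ / (2 * ν)) := by
            rw [Finset.sum_const, Finset.card_range, nsmul_eq_mul]
        _ ≤ ν * (δ / (2 * ν)) := by
            apply mul_le_mul_of_nonneg_right _ (le_of_lt hδ')
            exact_mod_cast Nat.sub_le ν 1
    have hνpos : (0 : ℝ) < ν := by exact_mod_cast hν
    have hhalf : (ν : ℝ) * (δ / (2 * ν)) = δ / 2 := by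
      field_simp
    calc dist (x (p n - ν)) (x (q n - ν))
        ≤ dist (x (p n - ν)) (x (p n)) + dist (x (p n)) (x (q n - 1))
          + dist (x (q n - 1)) (x (q n - ν)) := dist_triangle4 _ _ _ _
      _ ≤ ν * (δ / (2 * ν)) + ε + ν * (δ / (2 * ν)) := by
          have := hmid n
          have h2 : dist (x (q n - 1)) (x (q n - ν)) ≤ ν * (δ / (2 * ν)) := by
            rw [dist_comm]; exact hc2
          linarith [hc1]
      _ = ε + δ := by rw [hhalf]; ring
  -- limsup of shifted distances ≤ ε
  set p' : ℕ → ℕ := fun n => p n - ν with hp'def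
  set q' : ℕ → ℕ := fun n => q n - ν with hq'def
  have hp'mono : StrictMono p' := by
    apply strictMono_nat_of_lt_succ
    intro n
    have h1 : p n < p (n + 1) := hpmono (Nat.lt_succ_self n)
    have h2 := hνp n
    simp only [hp'def, Nat.succ_eq_add_one]
    omega
  have hq'mono : StrictMono q' := by
    apply strictMono_nat_of_lt_succ
    intro n
    have h1 : q n < q (n + 1) := hqmono (Nat.lt_succ_self n)
    have h2 := hνq n
    simp only [hq'def, Nat.succ_eq_add_one]
    omega
  have hcb : IsCoboundedUnder (· ≤ ·) atTop (fun n => dist (x (p' n)) (x (q' n))) :=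
    isCoboundedUnder_le_of_le atTop (fun n => dist_nonneg)
  have hlimsupd : limsup (fun n => dist (x (p' n)) (x (q' n))) atTop ≤ ε := by
    refine le_of_forall_pos_le_add ?_
    intro δ hδ
    exact limsup_le_of_le hcb (hev δ hδ)
  have hlimsupm : limsup (fun n => m (x (p' n)) (x (q' n))) atTop ≤ ε :=
    le_trans (hm p' q' hp'mono hq'mono) hlimsupd
  obtain ⟨N, hN⟩ := hkey p' q' hp'mono hq'mono hlimsupm
  have hfin := hN N le_rfl
  have h1 : p' N + ν = p N := by have := hνp N; simp only [hp'def]; omega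
  have h2 : q' N + ν = q N := by have := hνq N; simp only [hq'def]; omega
  rw [h1, h2] at hfin
  exact absurd hfin (not_le.mpr (hdist N))
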